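/- arXiv:2008.02975 — 2 statements merged into one kernel-verified Lean document; each statement's English description precedes it below -/
import Mathlib

section
/- Let G be a finite connected simple graph of order n ≥ 2. Then γ(M(G ∘ K₁)) = n, where G ∘ K₁ denotes the corona of G and γ denotes the domination number. -/
/-- `S` is a dominating set of the graph `H`. -/
def IsDomSet {V : Type*} (H : SimpleGraph V) (S : Set V) : Prop :=
  ∀ v : V, v ∈ S ∨ ∃ s ∈ S, H.Adj v s

/-- The domination number of a graph `H`. -/
noncomputable def domNum {V : Type*} (H : SimpleGraph V) : ℕ :=
  sInf {k : ℕ | ∃ S : Set V, IsDomSet H S ∧ S.ncard = k}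

/-- The middle graph `M(G)` of a graph `G`: its vertices are the vertices and edges
of `G`; a vertex is adjacent to the edges incident to it, and two edges are adjacent
iff they are distinct and share an endpoint. -/
def middleGraph {V : Type*} (G : SimpleGraph V) : SimpleGraph (V ⊕ G.edgeSet) where
  Adj x y :=
    match x, y with
    | Sum.inl _, Sum.inl _ => False
    | Sum.inl v, Sum.inr e => v ∈ (e : Sym2 V)
    | Sum.inr e, Sum.inl v => v ∈ (e : Sym2 V)
    | Sum.inr e, Sum.inr f => e ≠ f ∧ ∃ v, v ∈ (e : Sym2 V) ∧ v ∈ (f : Sym2 V)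
  symm := by
    refine ⟨?_⟩
    rintro (v | e) (w | f) h
    · exact h.elim
    · exact h
    · exact h
    · exact ⟨Ne.symm h.1, h.2.imp fun v hv => ⟨hv.2, hv.1⟩⟩
  loopless := by
    refine ⟨?_⟩
    rintro (v | e) h
    · exact h.elim
    · exact h.1 rfl

/-- The corona `G ∘ K₁`: add to each vertex of `G` a pendant vertex. -/
def corona {V : Type*} (G : SimpleGraph V) : SimpleGraph (V ⊕ V) where
  Adj x y :=
    match x, y with
    | Sum.inl a, Sum.inl b => G.Adj a b
    | Sum.inl a, Sum.inr b => a = b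
    | Sum.inr a, Sum.inl b => b = a
    | Sum.inr _, Sum.inr _ => False
  symm := by
    refine ⟨?_⟩
    rintro (a | a) (b | b) h
    · exact G.adj_symm h
    · exact h
    · exact h
    · exact h.elim
  loopless := by
    refine ⟨?_⟩
    rintro (a | a) h
    · exact G.ne_of_adj h rfl
    · exact h.elim

section Aux
variable {V : Type*} (G : SimpleGraph V)

lemma corona_adj_il_il (a b : V) : (corona G).Adj (Sum.inl a) (Sum.inl b) ↔ G.Adj a b := Iff.rfl
lemma corona_adj_il_ir (a b : V) : (corona G).Adj (Sum.inl a) (Sum.inr b) ↔ a = b := Iff.rfl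
lemma corona_adj_ir_il (a b : V) : (corona G).Adj (Sum.inr a) (Sum.inl b) ↔ b = a := Iff.rfl
lemma corona_adj_ir_ir (a b : V) : ¬ (corona G).Adj (Sum.inr a) (Sum.inr b) := fun h => h

lemma mg_adj_v_e (v : V) (e : G.edgeSet) :
    (middleGraph G).Adj (Sum.inl v) (Sum.inr e) ↔ v ∈ (e : Sym2 V) := Iff.rfl
lemma mg_adj_e_e (e f : G.edgeSet) :
    (middleGraph G).Adj (Sum.inr e) (Sum.inr f) ↔
      e ≠ f ∧ ∃ v, v ∈ (e : Sym2 V) ∧ v ∈ (f : Sym2 V) := Iff.rfl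
lemma mg_adj_v_v (v w : V) : ¬ (middleGraph G).Adj (Sum.inl v) (Sum.inl w) := fun h => h

end Aux

/-- For a connected graph `G` of order `n ≥ 2`, `γ(M(G ∘ K₁)) = n`. -/
theorem domNum_middle_corona {V : Type*} [Fintype V] (G : SimpleGraph V) (n : ℕ)
    (hord : Fintype.card V = n) (hn : 2 ≤ n) (hconn : G.Connected) :
    domNum (middleGraph (corona G)) = n := by
  classical
  set H := corona G with hH
  have hpe : ∀ v : V, s(Sum.inl v, Sum.inr v) ∈ H.edgeSet := fun v =>
    (SimpleGraph.mem_edgeSet H).mpr rfl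
  set pe : V → H.edgeSet := fun v => ⟨s(Sum.inl v, Sum.inr v), hpe v⟩ with hpedef
  have peinj : Function.Injective pe := by
    intro v w h
    have h2 := congrArg Subtype.val h
    simp only [pe, Sym2.eq_iff] at h2
    rcases h2 with ⟨h3, _⟩ | ⟨h3, _⟩ <;> simp_all
  set f : V → (V ⊕ V) ⊕ H.edgeSet := fun v => Sum.inr (pe v) with hf
  have finj : Function.Injective f := fun v w h => peinj (Sum.inr_injective h)
  -- any edge containing a pendant vertex is the pendant edge
  have hpend : ∀ (v : V) (e : H.edgeSet),
      (Sum.inr v : V ⊕ V) ∈ (e : Sym2 (V ⊕ V)) → e = pe v := by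
    rintro v ⟨e, he⟩ hm
    induction e using Sym2.ind with
    | _ a b =>
      rw [SimpleGraph.mem_edgeSet] at he
      rw [Sym2.mem_iff] at hm
      rcases hm with h | h
      · subst h
        cases b with
        | inl b =>
          have hb : b = v := (corona_adj_ir_il G v b).mp he
          subst hb
          exact Subtype.ext (Sym2.eq_swap)
        | inr b => exact absurd he (corona_adj_ir_ir G v b)
      · subst h
        cases a with
        | inl a =>
          have hb : a = v := (corona_adj_il_ir G a v).mp he
          subst hb
          exact Subtype.ext rfl
        | inr a => exact absurd he (corona_adj_ir_ir G a v)
  have hdomS : IsDomSet (middleGraph H) (Set.range f) := by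
    rintro ((v | v) | ⟨e, he⟩)
    · refine Or.inr ⟨f v, ⟨v, rfl⟩, ?_⟩
      exact (mg_adj_v_e H (Sum.inl v) (pe v)).mpr (by simp [pe])
    · refine Or.inr ⟨f v, ⟨v, rfl⟩, ?_⟩
      exact (mg_adj_v_e H (Sum.inr v) (pe v)).mpr (by simp [pe])
    · induction e using Sym2.ind with
      | _ a b =>
        have he' : H.Adj a b := (SimpleGraph.mem_edgeSet H).mp he
        cases a with
        | inl a =>
          cases b with
          | inl b =>
            refine Or.inr ⟨f a, ⟨a, rfl⟩, (mg_adj_e_e H _ _).mpr ⟨?_, Sum.inl a, by simp, by simp [pe]⟩⟩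
            intro hcon
            have := congrArg Subtype.val hcon
            simp only [pe, Sym2.eq_iff] at this
            rcases this with ⟨_, h3⟩ | ⟨h3, _⟩ <;> exact absurd h3 (by simp)
          | inr b =>
            have hb : a = b := (corona_adj_il_ir G a b).mp he'
            subst hb
            exact Or.inl ⟨a, by exact congrArg Sum.inr (Subtype.ext rfl)⟩
        | inr a =>
          cases b with
          | inl b =>
            have hb : b = a := (corona_adj_ir_il G a b).mp he'
            subst hb
            exact Or.inl ⟨b, by exact congrArg Sum.inr (Subtype.ext Sym2.eq_swap)⟩
          | inr b => exact absurd he' (corona_adj_ir_ir G a b)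
  have hcard : (Set.range f).ncard = n := by
    rw [← Set.image_univ, Set.ncard_image_of_injective _ finj, Set.ncard_univ,
      Nat.card_eq_fintype_card, hord]
  apply le_antisymm
  · exact Nat.sInf_le ⟨Set.range f, hdomS, hcard⟩
  · refine le_csInf ⟨n, Set.range f, hdomS, hcard⟩ ?_
    rintro k ⟨S, hS, rfl⟩
    have hSfin : S.Finite := Set.toFinite S
    have hchoice : ∀ v : V, (Sum.inl (Sum.inr v) ∈ S) ∨ (Sum.inr (pe v) ∈ S) := by
      intro v
      rcases hS (Sum.inl (Sum.inr v)) with h | ⟨s, hs, hadj⟩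
      · exact Or.inl h
      · right
        cases s with
        | inl w => exact absurd hadj (mg_adj_v_v H _ w)
        | inr e =>
          have hev := hpend v e ((mg_adj_v_e H _ e).mp hadj)
          rwa [hev] at hs
    set g : V → (V ⊕ V) ⊕ H.edgeSet := fun v =>
      if Sum.inl (Sum.inr v) ∈ S then Sum.inl (Sum.inr v) else Sum.inr (pe v) with hg
    have hgS : ∀ v, g v ∈ S := by
      intro v
      by_cases h : Sum.inl (Sum.inr v) ∈ S
      · simp only [g, if_pos h]; exact h
      · rcases hchoice v with h' | h'
        · exact absurd h' h
        · simpa [g, h] using h'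
    have ginj : Function.Injective g := by
      intro v w hvw
      by_cases h1 : Sum.inl (Sum.inr v) ∈ S <;> by_cases h2 : Sum.inl (Sum.inr w) ∈ S <;>
        simp only [g, h1, h2, if_true, if_false] at hvw
      · exact Sum.inr_injective (Sum.inl_injective hvw)
      · exact absurd hvw (by simp)
      · exact absurd hvw (by simp)
      · exact peinj (Sum.inr_injective hvw)
    have hsub : Set.range g ⊆ S := by rintro x ⟨v, rfl⟩; exact hgS v
    calc n = (Set.range g).ncard := by
            rw [← Set.image_univ, Set.ncard_image_of_injective _ ginj, Set.ncard_univ,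
              Nat.card_eq_fintype_card, hord]
      _ ≤ S.ncard := Set.ncard_le_ncard hsub hSfin
end

section
/- Let G be a finite connected simple graph of order n ≥ 4. Then G is isomorphic to the star graph K_{1,n−1} if and only if γ(M(G)) = n − 1, where γ denotes the domination number. -/
/-- The star graph `K_{1,n}`: the vertex `0` is the center, adjacent to the `n` leaves. -/
def starGraph (n : ℕ) : SimpleGraph (Fin (n + 1)) where
  Adj x y := x ≠ y ∧ (x = 0 ∨ y = 0)
  symm := by
    refine ⟨?_⟩
    rintro x y ⟨h1, h2⟩
    exact ⟨h1.symm, h2.symm⟩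
  loopless := by
    refine ⟨?_⟩
    rintro x ⟨h1, _⟩
    exact h1 rfl

lemma exists_adj_of_conn {V : Type*} [Fintype V] {G : SimpleGraph V}
    (hconn : G.Connected) (h2 : 2 ≤ Fintype.card V) (v : V) : ∃ w, G.Adj v w := by
  obtain ⟨u, hu⟩ := Fintype.exists_ne_of_one_lt_card (by omega) v
  obtain ⟨w⟩ := hconn.preconnected v u
  cases w with
  | nil => exact absurd rfl hu
  | cons h _ => exact ⟨_, h⟩

lemma star_domNum {V : Type*} [Fintype V] {G : SimpleGraph V} {c : V}
    (hstar : ∀ x y, G.Adj x y ↔ x ≠ y ∧ (x = c ∨ y = c)) {n : ℕ}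
    (hord : Fintype.card V = n) (hn : 2 ≤ n) :
    domNum (middleGraph G) = n - 1 := by
  classical
  -- every edge has the form s(c,u)
  have key : ∀ e : G.edgeSet, ∃ u, u ≠ c ∧ (e : Sym2 V) = s(c, u) := by
    rintro ⟨e, he⟩
    induction e using Sym2.ind with
    | _ x y =>
      rw [SimpleGraph.mem_edgeSet, hstar] at he
      obtain ⟨hxy, hc | hc⟩ := he
      · exact ⟨y, by subst hc; exact (Ne.symm hxy), by subst hc; rfl⟩
      · exact ⟨x, by subst hc; exact hxy, by subst hc; exact Sym2.eq_swap⟩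
  have hadj : ∀ v : V, v ≠ c → G.Adj c v := fun v hv =>
    (hstar c v).2 ⟨Ne.symm hv, Or.inl rfl⟩
  set f : V → V ⊕ G.edgeSet := fun v =>
    if h : G.Adj c v then Sum.inr ⟨s(c, v), h⟩ else Sum.inl v with hf
  have hfv : ∀ v (hv : v ≠ c), f v = Sum.inr ⟨s(c, v), hadj v hv⟩ := by
    intro v hv; simp only [hf, dif_pos (hadj v hv)]
  have hinj : Set.InjOn f {v | v ≠ c} := by
    intro v hv w hw h
    rw [hfv v hv, hfv w hw] at h
    have h := Sym2.eq_iff.mp (congrArg Subtype.val (Sum.inr_injective h))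
    rcases h with ⟨-, h⟩ | ⟨h1, h2⟩
    · exact h
    · exact absurd h2 hv
  have hcardset : ({v | v ≠ c} : Set V).ncard = n - 1 := by
    have : ({v | v ≠ c} : Set V) = ({c} : Set V)ᶜ := by ext v; simp
    rw [this]
    have := Set.ncard_add_ncard_compl ({c} : Set V)
    rw [Set.ncard_singleton, Nat.card_eq_fintype_card, hord] at this
    omega
  have hS : IsDomSet (middleGraph G) (f '' {v | v ≠ c}) := by
    rintro (v | e)
    · by_cases hv : v = c
      · subst hv
        obtain ⟨u, hu⟩ := Fintype.exists_ne_of_one_lt_card (by omega) v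
        refine Or.inr ⟨f u, ⟨u, hu, rfl⟩, ?_⟩
        rw [hfv u hu]
        exact Sym2.mem_mk_left v u
      · refine Or.inr ⟨f v, ⟨v, hv, rfl⟩, ?_⟩
        rw [hfv v hv]
        exact Sym2.mem_mk_right c v
    · obtain ⟨u, hu, hue⟩ := key e
      refine Or.inl ⟨u, hu, ?_⟩
      rw [hfv u hu]
      exact congrArg Sum.inr (Subtype.ext hue.symm)
  apply le_antisymm
  · apply Nat.sInf_le
    exact ⟨f '' {v | v ≠ c}, hS, by rw [Set.ncard_image_of_injOn hinj, hcardset]⟩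
  · have hmemset : n - 1 ∈ {k : ℕ | ∃ S, IsDomSet (middleGraph G) S ∧ S.ncard = k} :=
      ⟨f '' {v | v ≠ c}, hS, by rw [Set.ncard_image_of_injOn hinj, hcardset]⟩
    apply le_csInf ⟨n - 1, hmemset⟩
    rintro k ⟨S, hSdom, rfl⟩
    rw [← hcardset]
    set g : V → V ⊕ G.edgeSet := fun v => if Sum.inl v ∈ S then Sum.inl v else f v with hg
    have hmem : ∀ v ∈ ({v | v ≠ c} : Set V), g v ∈ S := by
      intro v hv
      by_cases h1 : Sum.inl v ∈ S
      · simpa [hg, h1] using h1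
      · rcases hSdom (Sum.inl v) with h | ⟨s, hsS, hadj'⟩
        · exact absurd h h1
        · rcases s with w | e
          · exact absurd hadj' (by simp [middleGraph])
          · have hve : v ∈ (e : Sym2 V) := hadj'
            obtain ⟨u, hu, hue⟩ := key e
            rw [hue, Sym2.mem_iff] at hve
            have hvu : v = u := hve.resolve_left hv
            have : g v = Sum.inr e := by
              rw [hg]
              simp only [if_neg h1]
              rw [hfv v hv]
              exact congrArg Sum.inr (Subtype.ext (by
                show s(c, v) = (e : Sym2 V); rw [hue, hvu]))
            rw [this]; exact hsS
    have hginj : Set.InjOn g ({v | v ≠ c} : Set V) := by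
      intro v hv w hw h
      rw [hg] at h
      simp only at h
      by_cases h1 : Sum.inl v ∈ S <;> by_cases h2 : Sum.inl w ∈ S <;>
        simp only [if_pos, if_neg, h1, h2, if_true, if_false] at h
      · exact Sum.inl.injEq _ _ ▸ (by injection h)
      · rw [hfv w hw] at h; exact absurd h (by simp)
      · rw [hfv v hv] at h; exact absurd h (by simp)
      · exact hinj hv hw h
    exact Set.ncard_le_ncard_of_injOn g hmem hginj (Set.toFinite S)

lemma disj_edges_domNum_le {V : Type*} [Fintype V] {G : SimpleGraph V}
    {a b x y : V} (hab : G.Adj a b) (hxy : G.Adj x y)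
    (hax : a ≠ x) (hay : a ≠ y) (hbx : b ≠ x) (hby : b ≠ y) {n : ℕ}
    (hord : Fintype.card V = n) (hn : 4 ≤ n) :
    domNum (middleGraph G) ≤ n - 2 := by
  classical
  set A : Set V := {a, b, x, y} with hA
  set e1 : G.edgeSet := ⟨s(a, b), hab⟩ with he1
  set e2 : G.edgeSet := ⟨s(x, y), hxy⟩ with he2
  set S : Set (V ⊕ G.edgeSet) :=
    Sum.inl '' Aᶜ ∪ {Sum.inr e1, Sum.inr e2} with hSdef
  have hdom : IsDomSet (middleGraph G) S := by
    rintro (v | e)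
    · by_cases hv : v ∈ A
      · rcases hv with h | h | h | h
        · exact Or.inr ⟨Sum.inr e1, Or.inr (Or.inl rfl), by
            show v ∈ s(a, b); rw [show v = a from h]; exact Sym2.mem_mk_left a b⟩
        · exact Or.inr ⟨Sum.inr e1, Or.inr (Or.inl rfl), by
            show v ∈ s(a, b); rw [show v = b from h]; exact Sym2.mem_mk_right a b⟩
        · exact Or.inr ⟨Sum.inr e2, Or.inr (Or.inr rfl), by
            show v ∈ s(x, y); rw [show v = x from h]; exact Sym2.mem_mk_left x y⟩
        · exact Or.inr ⟨Sum.inr e2, Or.inr (Or.inr rfl), by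
            show v ∈ s(x, y); rw [show v = y from h]; exact Sym2.mem_mk_right x y⟩
      · exact Or.inl (Or.inl ⟨v, hv, rfl⟩)
    · obtain ⟨ev, hev⟩ := e
      induction ev using Sym2.ind with
      | _ p q =>
        by_cases hp : p ∈ A
        · by_cases hq : q ∈ A
          · -- both endpoints in {a,b,x,y}
            by_cases h1 : s(p, q) = s(a, b)
            · exact Or.inl (Or.inr (Or.inl (congrArg Sum.inr (Subtype.ext h1))))
            · by_cases h2 : s(p, q) = s(x, y)
              · exact Or.inl (Or.inr (Or.inr (congrArg Sum.inr (Subtype.ext h2))))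
              · -- shares a vertex with e1 or e2
                have hpq : p ≠ q := (G.mem_edgeSet.mp hev).ne
                have hcase : (p = a ∨ p = b ∨ q = a ∨ q = b) := by
                  by_contra hcon
                  push_neg at hcon
                  obtain ⟨h3, h4, h5, h6⟩ := hcon
                  rcases hp with h | h | h | h <;> rcases hq with h' | h' | h' | h' <;>
                    simp_all [Sym2.eq_iff]
                refine Or.inr ⟨Sum.inr e1, Or.inr (Or.inl rfl), ?_⟩
                refine ⟨fun hc => h1 (congrArg Subtype.val hc), ?_⟩
                rcases hcase with h | h | h | h
                · exact ⟨p, Sym2.mem_mk_left p q, by rw [h]; exact Sym2.mem_mk_left a b⟩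
                · exact ⟨p, Sym2.mem_mk_left p q, by rw [h]; exact Sym2.mem_mk_right a b⟩
                · exact ⟨q, Sym2.mem_mk_right p q, by rw [h]; exact Sym2.mem_mk_left a b⟩
                · exact ⟨q, Sym2.mem_mk_right p q, by rw [h]; exact Sym2.mem_mk_right a b⟩
          · exact Or.inr ⟨Sum.inl q, Or.inl ⟨q, hq, rfl⟩, Sym2.mem_mk_right p q⟩
        · exact Or.inr ⟨Sum.inl p, Or.inl ⟨p, hp, rfl⟩, Sym2.mem_mk_left p q⟩
  have hcardA : A.ncard = 4 := by
    have hne : a ≠ b := hab.ne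
    have hne2 : x ≠ y := hxy.ne
    rw [hA]
    rw [Set.ncard_insert_of_notMem (by simp [hne, hax, hay]),
        Set.ncard_insert_of_notMem (by simp [hbx, hby]),
        Set.ncard_insert_of_notMem (by simp [hne2]), Set.ncard_singleton]
  have hcardS : S.ncard = (n - 4) + 2 := by
    rw [hSdef, Set.ncard_union_eq (by
      rw [Set.disjoint_left]
      rintro z ⟨w, -, rfl⟩ (h | h) <;> simp_all) (Set.toFinite _) (Set.toFinite _)]
    congr 1
    · rw [Set.ncard_image_of_injective _ Sum.inl_injective]
      have := Set.ncard_add_ncard_compl A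
      rw [hcardA, Nat.card_eq_fintype_card, hord] at this
      omega
    · refine Set.ncard_pair ?_
      intro hc
      have : s(a, b) = s(x, y) := congrArg Subtype.val (Sum.inr_injective hc)
      rw [Sym2.eq_iff] at this
      tauto
  have hmem : (n - 4) + 2 ∈ {k : ℕ | ∃ S, IsDomSet (middleGraph G) S ∧ S.ncard = k} :=
    ⟨S, hdom, hcardS⟩
  calc domNum (middleGraph G) ≤ (n - 4) + 2 := Nat.sInf_le hmem
    _ ≤ n - 2 := by omega

lemma star_of_no_disj {V : Type*} [Fintype V] {G : SimpleGraph V}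
    (hconn : G.Connected) (h4 : 4 ≤ Fintype.card V)
    (hno : ¬ ∃ a b x y, G.Adj a b ∧ G.Adj x y ∧ a ≠ x ∧ a ≠ y ∧ b ≠ x ∧ b ≠ y) :
    ∃ c, ∀ p q, G.Adj p q ↔ p ≠ q ∧ (p = c ∨ q = c) := by
  classical
  have hshare : ∀ p q r s, G.Adj p q → G.Adj r s → p = r ∨ p = s ∨ q = r ∨ q = s := by
    intro p q r s h1 h2
    by_contra hcon
    push_neg at hcon
    exact hno ⟨p, q, r, s, h1, h2, hcon.1, hcon.2.1, hcon.2.2.1, hcon.2.2.2⟩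
  have hVne : Nonempty V := Fintype.card_pos_iff.mp (by omega)
  obtain ⟨a⟩ := hVne
  obtain ⟨b, hab⟩ := exists_adj_of_conn hconn (by omega) a
  have hcenter : ∃ c, ∀ p q, G.Adj p q → p = c ∨ q = c := by
    by_cases hA : ∀ p q, G.Adj p q → p = a ∨ q = a
    · exact ⟨a, hA⟩
    · push_neg at hA
      obtain ⟨p, q, hpq, hpa, hqa⟩ := hA
      -- some edge avoids a; it must contain b
      have hx : ∃ x, G.Adj b x ∧ x ≠ a ∧ x ≠ b := by
        rcases hshare a b p q hab hpq with h | h | h | h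
        · exact absurd h.symm hpa
        · exact absurd h.symm hqa
        · exact ⟨q, by rw [h]; exact hpq, hqa, fun hc => hpq.ne (h.symm.trans hc.symm)⟩
        · exact ⟨p, by rw [h]; exact hpq.symm, hpa, fun hc => hpq.ne' (h.symm.trans hc.symm)⟩
      obtain ⟨x, hbx, hxa, hxb⟩ := hx
      refine ⟨b, fun r s hrs => ?_⟩
      by_contra hcon
      push_neg at hcon
      obtain ⟨hrb, hsb⟩ := hcon
      -- edge rs avoids b, so it meets ab in a and bx in x
      have h1 : r = a ∨ s = a := by
        rcases hshare r s a b hrs hab with h | h | h | h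
        · exact Or.inl h
        · exact absurd h hrb
        · exact Or.inr h
        · exact absurd h hsb
      have h2 : r = x ∨ s = x := by
        rcases hshare r s b x hrs hbx with h | h | h | h
        · exact absurd h hrb
        · exact Or.inl h
        · exact absurd h hsb
        · exact Or.inr h
      -- so {r,s} = {a,x}
      have hax' : (r = a ∧ s = x) ∨ (r = x ∧ s = a) := by
        rcases h1 with h | h <;> rcases h2 with h' | h'
        · exact absurd (h.symm.trans h') (Ne.symm hxa)
        · exact Or.inl ⟨h, h'⟩
        · exact Or.inr ⟨h', h⟩
        · exact absurd (h.symm.trans h') (Ne.symm hxa)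
      have hAdjax : G.Adj a x := by
        rcases hax' with ⟨h, h'⟩ | ⟨h, h'⟩
        · exact h ▸ h' ▸ hrs
        · exact (h ▸ h' ▸ hrs).symm
      -- pick a fourth vertex
      have hd : ∃ d, d ∉ ({a, b, x} : Finset V) := by
        by_contra hc
        push_neg at hc
        have hsub : (Finset.univ : Finset V) ⊆ {a, b, x} := fun z _ => hc z
        have := Finset.card_le_card hsub
        rw [Finset.card_univ] at this
        have h3 : ({a, b, x} : Finset V).card ≤ 3 := by
          apply le_trans (Finset.card_insert_le _ _)
          have := Finset.card_insert_le b ({x} : Finset V)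
          simp at this ⊢
          omega
        omega
      obtain ⟨d, hd⟩ := hd
      simp only [Finset.mem_insert, Finset.mem_singleton, not_or] at hd
      obtain ⟨hda, hdb, hdx⟩ := hd
      obtain ⟨t, hdt⟩ := exists_adj_of_conn hconn (by omega) d
      have ht1 : t = a ∨ t = b := by
        rcases hshare d t a b hdt hab with h | h | h | h
        · exact absurd h hda
        · exact absurd h hdb
        · exact Or.inl h
        · exact Or.inr h
      have ht2 : t = b ∨ t = x := by
        rcases hshare d t b x hdt hbx with h | h | h | h
        · exact absurd h hdb
        · exact absurd h hdx
        · exact Or.inl h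
        · exact Or.inr h
      have ht3 : t = a ∨ t = x := by
        rcases hshare d t a x hdt hAdjax with h | h | h | h
        · exact absurd h hda
        · exact absurd h hdx
        · exact Or.inl h
        · exact Or.inr h
      rcases ht1 with h | h
      · rcases ht2 with h' | h'
        · exact hab.ne (h.symm.trans h')
        · exact hxa (h'.symm.trans h).symm.symm
      · rcases ht3 with h' | h'
        · exact hab.ne (h'.symm.trans h)
        · exact hxb (h'.symm.trans h)
  obtain ⟨c, hc⟩ := hcenter
  refine ⟨c, fun p q => ⟨fun h => ⟨h.ne, hc p q h⟩, ?_⟩⟩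
  rintro ⟨hpq, h | h⟩
  · subst h
    obtain ⟨t, hqt⟩ := exists_adj_of_conn hconn (by omega) q
    rcases hc q t hqt with h' | h'
    · exact absurd h'.symm hpq
    · exact (h' ▸ hqt).symm
  · subst h
    obtain ⟨t, hpt⟩ := exists_adj_of_conn hconn (by omega) p
    rcases hc p t hpt with h' | h'
    · exact absurd h' hpq
    · exact h' ▸ hpt

/-- A connected graph `G` of order `n ≥ 4` is isomorphic to the star
`K_{1,n-1}` if and only if `γ(M(G)) = n - 1`. -/
theorem star_iff_domNum_middle_eq {V : Type*} [Fintype V] (G : SimpleGraph V) (n : ℕ)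
    (hord : Fintype.card V = n) (hn : 4 ≤ n) (hconn : G.Connected) :
    Nonempty (G ≃g starGraph (n - 1)) ↔ domNum (middleGraph G) = n - 1 := by
  classical
  constructor
  · rintro ⟨φ⟩
    have hstar : ∀ x y, G.Adj x y ↔ x ≠ y ∧ (x = φ.symm 0 ∨ y = φ.symm 0) := by
      intro x y
      constructor
      · intro h
        have h' : (starGraph (n - 1)).Adj (φ x) (φ y) := φ.map_adj_iff.mpr h
        obtain ⟨h1, h2⟩ := h'
        refine ⟨h.ne, ?_⟩
        rcases h2 with h2 | h2
        · exact Or.inl (by rw [← h2]; exact (φ.toEquiv.symm_apply_apply x).symm)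
        · exact Or.inr (by rw [← h2]; exact (φ.toEquiv.symm_apply_apply y).symm)
      · rintro ⟨h1, h2 | h2⟩
        · refine φ.map_adj_iff.mp ⟨fun hc => h1 (φ.toEquiv.injective hc), Or.inl ?_⟩
          rw [h2]; exact φ.toEquiv.apply_symm_apply 0
        · refine φ.map_adj_iff.mp ⟨fun hc => h1 (φ.toEquiv.injective hc), Or.inr ?_⟩
          rw [h2]; exact φ.toEquiv.apply_symm_apply 0
    exact star_domNum hstar hord (by omega)
  · intro h
    by_cases hdisj : ∃ a b x y, G.Adj a b ∧ G.Adj x y ∧ a ≠ x ∧ a ≠ y ∧ b ≠ x ∧ b ≠ y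
    · obtain ⟨a, b, x, y, h1, h2, h3, h4, h5, h6⟩ := hdisj
      have := disj_edges_domNum_le h1 h2 h3 h4 h5 h6 hord hn
      omega
    · obtain ⟨c, hstar⟩ := star_of_no_disj hconn (hord ▸ hn) hdisj
      have hcard : Fintype.card V = (n - 1) + 1 := by omega
      let e := Fintype.equivFinOfCardEq hcard
      let ψ := e.trans (Equiv.swap (e c) 0)
      have hψc : ψ c = 0 := by
        show Equiv.swap (e c) 0 (e c) = 0
        exact Equiv.swap_apply_left _ _
      have hψ0 : ∀ v, ψ v = 0 ↔ v = c := by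
        intro v
        rw [← hψc]
        exact ⟨fun hc => ψ.injective hc, fun hc => congrArg ψ hc⟩
      refine ⟨⟨ψ, @fun u v => ?_⟩⟩
      show ((ψ u ≠ ψ v) ∧ (ψ u = 0 ∨ ψ v = 0)) ↔ G.Adj u v
      rw [hstar u v, hψ0, hψ0, ne_eq, Equiv.apply_eq_iff_eq, ← ne_eq]
end
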